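/- Let k ≥ 1 be odd. For every continuous function u : ℝ² → ℝ there exists a unique bivariate real polynomial v of total degree at most k that matches the Crouzeix–Raviart moments of u of order k. -/

import Mathlib

open MeasureTheory

/-- The reference triangle `T ⊂ ℝ²`, the convex hull of `(0,0)`, `(1,0)`, `(0,1)`. -/
noncomputable def refTriangle : Set (Fin 2 → ℝ) :=
  convexHull ℝ {![0, 0], ![1, 0], ![0, 1]}

/-- Parametrization of the first edge of the reference triangle: `γ₁(t) = (t, 0)`. -/
def edgeParam₁ (t : ℝ) : Fin 2 → ℝ := ![t, 0]

/-- Parametrization of the second edge of the reference triangle: `γ₂(t) = (0, t)`. -/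
def edgeParam₂ (t : ℝ) : Fin 2 → ℝ := ![0, t]

/-- Parametrization of the third edge of the reference triangle: `γ₃(t) = (t, 1 − t)`. -/
def edgeParam₃ (t : ℝ) : Fin 2 → ℝ := ![t, 1 - t]

/-- `v` matches the Crouzeix–Raviart moments of `u` of order `k`: all edge moments
of order `≤ k − 1` on the three edges of the reference triangle and all interior
moments of order `≤ k − 3` agree. -/
def MatchesCRMoments (k : ℕ) (u v : (Fin 2 → ℝ) → ℝ) : Prop :=
  (∀ i < k, ∀ γ ∈ ({edgeParam₁, edgeParam₂, edgeParam₃} : Set (ℝ → Fin 2 → ℝ)),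
      ∫ t in (0 : ℝ)..1, t ^ i * v (γ t) = ∫ t in (0 : ℝ)..1, t ^ i * u (γ t)) ∧
  (∀ a b : ℕ, a + b + 3 ≤ k →
      ∫ x in refTriangle, (x 0) ^ a * (x 1) ^ b * v x
        = ∫ x in refTriangle, (x 0) ^ a * (x 1) ^ b * u x)

namespace CRaux

open Polynomial

lemma momzero_mul {k : ℕ} {p : ℝ[X]}
    (hmom : ∀ i < k, ∫ t in (0:ℝ)..1, t ^ i * p.eval t = 0)
    (q : ℝ[X]) (hq : q.natDegree < k) :
    ∫ t in (0:ℝ)..1, q.eval t * p.eval t = 0 := by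
  have hrep := q.as_sum_range' k hq
  have hpt : ∀ t : ℝ, q.eval t * p.eval t
      = ∑ i ∈ Finset.range k, q.coeff i * (t ^ i * p.eval t) := by
    intro t
    conv_lhs => rw [hrep]
    rw [Polynomial.eval_finset_sum, Finset.sum_mul]
    refine Finset.sum_congr rfl fun i _ => ?_
    rw [Polynomial.eval_monomial]; ring
  simp_rw [hpt]
  rw [intervalIntegral.integral_finset_sum (f := fun i t => q.coeff i * (t ^ i * p.eval t)) (fun i _ =>
    ((continuous_const.mul ((continuous_pow i).mul p.continuous)).intervalIntegrable _ _))]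
  refine Finset.sum_eq_zero fun i hi => ?_
  rw [intervalIntegral.integral_const_mul, hmom i (Finset.mem_range.mp hi), mul_zero]

lemma nonneg_int_zero (g : ℝ[X]) (hpos : ∀ t ∈ Set.Ioc (0:ℝ) (1:ℝ), 0 ≤ g.eval t)
    (hz : ∫ t in (0:ℝ)..1, g.eval t = 0) : g = 0 := by
  by_contra hg
  rw [intervalIntegral.integral_of_le zero_le_one] at hz
  have hae : (fun t => g.eval t) =ᵐ[volume.restrict (Set.Ioc (0:ℝ) 1)] 0 := by
    refine (MeasureTheory.integral_eq_zero_iff_of_nonneg_ae ?_ ?_).mp hz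
    · have h : ∀ᵐ t ∂(volume.restrict (Set.Ioc (0:ℝ) 1)), 0 ≤ g.eval t :=
        (MeasureTheory.ae_restrict_iff' measurableSet_Ioc).mpr
          (MeasureTheory.ae_of_all _ hpos)
      exact h
    · exact g.continuous.integrableOn_Ioc
  have h0 : volume ({t : ℝ | g.eval t ≠ 0} ∩ Set.Ioc (0:ℝ) 1) = 0 := by
    have := MeasureTheory.ae_iff.mp hae
    rwa [MeasureTheory.Measure.restrict_apply' measurableSet_Ioc] at this
  have hsub : Set.Ioc (0:ℝ) 1 ⊆ ({t : ℝ | g.eval t ≠ 0} ∩ Set.Ioc (0:ℝ) 1) ∪ {x | g.IsRoot x} := by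
    intro t ht
    by_cases h : g.eval t = 0
    · exact Or.inr h
    · exact Or.inl ⟨h, ht⟩
  have hroots : volume {x : ℝ | g.IsRoot x} = 0 :=
    Set.Finite.measure_zero (Polynomial.finite_setOf_isRoot hg) volume
  have hle : volume (Set.Ioc (0:ℝ) 1)
      ≤ volume ({t : ℝ | g.eval t ≠ 0} ∩ Set.Ioc (0:ℝ) 1) + volume {x : ℝ | g.IsRoot x} :=
    le_trans (measure_mono hsub) (measure_union_le _ _)
  rw [h0, hroots, add_zero, Real.volume_Ioc] at hle
  norm_num at hle

lemma poly_eq_zero_of_moments {m : ℕ} {p : ℝ[X]} (hdeg : p.natDegree < m)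
    (hmom : ∀ i < m, ∫ t in (0:ℝ)..1, t ^ i * p.eval t = 0) : p = 0 := by
  have h2 : ∫ t in (0:ℝ)..1, (p * p).eval t = 0 := by
    simp_rw [Polynomial.eval_mul]
    exact momzero_mul hmom p hdeg
  have := nonneg_int_zero (p * p)
    (fun t _ => by rw [Polynomial.eval_mul]; exact mul_self_nonneg _) h2
  exact mul_self_eq_zero.mp this

lemma natDegree_one_sub_X : ((C 1 : ℝ[X]) - X).natDegree = 1 := by
  have : (C 1 : ℝ[X]) - X = -(X - C 1) := by ring
  rw [this, natDegree_neg, natDegree_X_sub_C]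

lemma integral_flip (F : ℝ → ℝ) : ∫ t in (0:ℝ)..1, F (1 - t) = ∫ t in (0:ℝ)..1, F t := by
  have := intervalIntegral.integral_comp_sub_left (a := (0:ℝ)) (b := (1:ℝ)) F 1
  simpa using this

/-- moments of the flipped polynomial vanish -/
lemma mom_flip {k : ℕ} {p : ℝ[X]}
    (hmom : ∀ i < k, ∫ t in (0:ℝ)..1, t ^ i * p.eval t = 0) :
    ∀ i < k, ∫ t in (0:ℝ)..1, t ^ i * p.eval (1 - t) = 0 := by
  intro i hi
  have h1 : ∀ t : ℝ, t ^ i * p.eval (1 - t)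
      = (fun s => ((C 1 - X : ℝ[X]) ^ i).eval s * p.eval s) (1 - t) := by
    intro t; simp [sub_sub_cancel]
  simp_rw [h1]
  rw [integral_flip (fun s => ((C 1 - X : ℝ[X]) ^ i).eval s * p.eval s)]
  refine momzero_mul hmom _ (lt_of_le_of_lt ?_ hi)
  calc ((C 1 - X : ℝ[X]) ^ i).natDegree ≤ i * ((C 1 : ℝ[X]) - X).natDegree :=
        natDegree_pow_le
    _ = i := by rw [natDegree_one_sub_X, mul_one]

lemma poly_antisym {k : ℕ} (hk1 : 1 ≤ k) (hkodd : Odd k) {p : ℝ[X]} (hdeg : p.natDegree ≤ k)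
    (hmom : ∀ i < k, ∫ t in (0:ℝ)..1, t ^ i * p.eval t = 0) :
    ∀ t : ℝ, p.eval (1 - t) = - p.eval t := by
  set pc := p.comp (C 1 - X) with hpc
  have hevalc : ∀ t : ℝ, pc.eval t = p.eval (1 - t) := fun t => by
    simp [hpc, Polynomial.eval_comp]
  have hdegc : pc.natDegree ≤ k :=
    le_trans natDegree_comp_le (by rw [natDegree_one_sub_X, mul_one]; exact hdeg)
  set r := p + pc with hr
  have hdegr : r.natDegree ≤ k := le_trans (natDegree_add_le _ _) (max_le hdeg hdegc)
  have hrsym : ∀ t : ℝ, r.eval (1 - t) = r.eval t := by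
    intro t
    simp only [hr, eval_add, hevalc, sub_sub_cancel]
    ring
  have hmomr : ∀ i < k, ∫ t in (0:ℝ)..1, t ^ i * r.eval t = 0 := by
    intro i hi
    simp only [hr, eval_add, mul_add]
    rw [intervalIntegral.integral_add (f := fun t => t ^ i * p.eval t)
      (g := fun t => t ^ i * pc.eval t)
      (((continuous_pow i).mul p.continuous).intervalIntegrable _ _)
      (((continuous_pow i).mul pc.continuous).intervalIntegrable _ _)]
    have h2 : ∫ t in (0:ℝ)..1, t ^ i * pc.eval t = 0 := by
      simp_rw [hevalc]
      exact mom_flip hmom i hi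
    rw [hmom i hi, h2, add_zero]
  -- the extra k-th moment
  have hq2 : ((X : ℝ[X]) ^ k + (C 1 - X) ^ k).natDegree < k := by
    set q₂ := (X : ℝ[X]) ^ k + (C 1 - X) ^ k with hq2d
    have hco : q₂.coeff k = 0 := by
      have h1 : ((X : ℝ[X]) ^ k).coeff k = 1 := by simp
      have h2 : (((C 1 : ℝ[X]) - X) ^ k).coeff k = -1 := by
        rw [(show ((C 1 : ℝ[X]) - X) = -(X - C 1) by ring), neg_pow, hkodd.neg_one_pow]
        have hm : (((X : ℝ[X]) - C 1) ^ k).coeff k = 1 := by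
          have hmon : (((X : ℝ[X]) - C 1) ^ k).Monic := (monic_X_sub_C (1:ℝ)).pow k
          have hnd : (((X : ℝ[X]) - C 1) ^ k).natDegree = k := by
            rw [natDegree_pow, natDegree_X_sub_C, mul_one]
          have := hmon.coeff_natDegree
          rwa [hnd] at this
        have hm' : (((X : ℝ[X]) - 1) ^ k).coeff k = 1 := by simpa using hm
        simp [hm']
      simp only [hq2d, coeff_add, h1, h2]; ring
    have hle : q₂.natDegree ≤ k := by
      refine le_trans (natDegree_add_le _ _) (max_le (by simp) ?_)
      calc (((C 1 : ℝ[X]) - X) ^ k).natDegree ≤ k * ((C 1 : ℝ[X]) - X).natDegree :=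
          natDegree_pow_le
        _ = k := by rw [natDegree_one_sub_X, mul_one]
    rcases lt_or_eq_of_le hle with h | h
    · exact h
    · exfalso
      by_cases hz : q₂ = 0
      · rw [hz, natDegree_zero] at h; omega
      · refine hz (leadingCoeff_eq_zero.mp ?_)
        rw [Polynomial.leadingCoeff, h]
        exact hco
  have hIk : ∫ t in (0:ℝ)..1, t ^ k * r.eval t = 0 := by
    have hflip : ∫ t in (0:ℝ)..1, t ^ k * r.eval t
        = ∫ t in (0:ℝ)..1, (1 - t) ^ k * r.eval t := by
      have h1 : ∀ t : ℝ, t ^ k * r.eval t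
          = (fun s => (1 - s) ^ k * r.eval s) (1 - t) := by
        intro t; simp [sub_sub_cancel, hrsym]
      conv_lhs => rw [show (fun t => t ^ k * r.eval t) = fun t => (fun s => (1 - s) ^ k * r.eval s) (1 - t) from funext h1]
      exact integral_flip (fun s => (1 - s) ^ k * r.eval s)
    have hsum : (∫ t in (0:ℝ)..1, t ^ k * r.eval t) + ∫ t in (0:ℝ)..1, (1 - t) ^ k * r.eval t
        = ∫ t in (0:ℝ)..1, ((X ^ k + (C 1 - X) ^ k : ℝ[X]).eval t) * r.eval t := by
      rw [← intervalIntegral.integral_add (f := fun t => t ^ k * r.eval t)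
        (g := fun t => (1 - t) ^ k * r.eval t)
        (((continuous_pow k).mul r.continuous).intervalIntegrable _ _)
        ((((continuous_const.sub continuous_id').pow k).mul r.continuous).intervalIntegrable _ _)]
      congr 1; funext t; simp; ring
    have hz := momzero_mul hmomr _ hq2
    rw [hz] at hsum
    linarith [hflip, hsum]
  have hrz : r = 0 := by
    refine poly_eq_zero_of_moments (m := k + 1) (by omega) ?_
    intro i hi
    rcases Nat.lt_or_ge i k with h | h
    · exact hmomr i h
    · have : i = k := by omega
      subst this; exact hIk
  intro t
  have := congrArg (Polynomial.eval t) hrz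
  simp only [hr, eval_add, eval_zero, hevalc] at this
  linarith [this]

lemma poly_zero_of_vanish_ends {k : ℕ} {p : ℝ[X]} (hdeg : p.natDegree ≤ k)
    (hmom : ∀ i < k, ∫ t in (0:ℝ)..1, t ^ i * p.eval t = 0)
    (h0 : p.eval 0 = 0) (h1 : p.eval 1 = 0) : p = 0 := by
  have hdvd0 : X ∣ p := X_dvd_iff.mpr (by rwa [Polynomial.coeff_zero_eq_eval_zero])
  obtain ⟨p₁, hp₁⟩ := hdvd0
  have hdvd1 : (X - C 1) ∣ p₁ := by
    refine dvd_iff_isRoot.mpr ?_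
    have : p.eval 1 = 1 * p₁.eval 1 := by rw [hp₁]; simp
    rw [h1] at this
    simpa [IsRoot] using this.symm
  obtain ⟨q, hq⟩ := hdvd1
  have hpfac : p = X * (X - C 1) * q := by rw [hp₁, hq]; ring
  by_cases hqz : q = 0
  · rw [hpfac, hqz, mul_zero]
  · have hdq : q.natDegree < k := by
      have h2 : p.natDegree = 2 + q.natDegree := by
        rw [hpfac, natDegree_mul (mul_ne_zero X_ne_zero (X_sub_C_ne_zero 1)) hqz,
          natDegree_mul X_ne_zero (X_sub_C_ne_zero 1), natDegree_X, natDegree_X_sub_C]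
      omega
    have hI := momzero_mul hmom q hdq
    have hgz : -(q * p) = 0 := by
      refine nonneg_int_zero _ ?_ ?_
      · intro t ht
        rw [hpfac]
        simp only [eval_neg, eval_mul, eval_X, eval_sub, eval_one, eval_C]
        have h1' : 0 ≤ t := le_of_lt ht.1
        have h2' : t ≤ 1 := ht.2
        nlinarith [mul_nonneg (mul_nonneg h1' (sub_nonneg.2 h2')) (sq_nonneg (q.eval t))]
      · simp only [eval_neg, eval_mul]
        rw [intervalIntegral.integral_neg]
        rw [hI]; ring
    have hqp : q * p = 0 := neg_eq_zero.mp hgz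
    exact Or.elim (mul_eq_zero.mp hqp) (fun h => (hqz h).elim) id

open MvPolynomial

/-- evaluation of a polynomial-valued substitution -/
lemma eval_aeval_poly (g : Fin 2 → ℝ[X]) (v : MvPolynomial (Fin 2) ℝ) (t : ℝ) :
    (MvPolynomial.aeval g v).eval t = MvPolynomial.eval (fun i => (g i).eval t) v := by
  induction v using MvPolynomial.induction_on with
  | C a => simp
  | add p q hp hq => simp [hp, hq]
  | mul_X p i hp => simp [hp]

lemma eval_aeval_mv (g : Fin 2 → MvPolynomial (Fin 2) ℝ) (v : MvPolynomial (Fin 2) ℝ)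
    (p : Fin 2 → ℝ) :
    MvPolynomial.eval p (MvPolynomial.aeval g v)
      = MvPolynomial.eval (fun i => MvPolynomial.eval p (g i)) v := by
  induction v using MvPolynomial.induction_on with
  | C a => simp only [MvPolynomial.aeval_C, MvPolynomial.eval_C]; simp
  | add a b ha hb => simp only [map_add, ha, hb]
  | mul_X a i ha => simp only [map_mul, MvPolynomial.aeval_X, MvPolynomial.eval_X, ha]

lemma natDegree_aeval_le (g : Fin 2 → ℝ[X]) (hg : ∀ i, (g i).natDegree ≤ 1)
    (v : MvPolynomial (Fin 2) ℝ) : (MvPolynomial.aeval g v).natDegree ≤ v.totalDegree := by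
  conv_lhs => rw [v.as_sum]
  rw [map_sum]
  refine Polynomial.natDegree_sum_le_of_forall_le _ _ fun d hd => ?_
  rw [MvPolynomial.aeval_monomial]
  refine le_trans (Polynomial.natDegree_mul_le) ?_
  have h1 : (algebraMap ℝ ℝ[X] (MvPolynomial.coeff d v)).natDegree = 0 := by
    simp [Polynomial.natDegree_C]
  rw [h1, zero_add]
  have h2 : (d.prod fun i k => g i ^ k).natDegree ≤ d.sum fun _ e => e := by
    rw [Finsupp.prod]
    refine le_trans (Polynomial.natDegree_prod_le _ _) ?_
    rw [Finsupp.sum]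
    refine Finset.sum_le_sum fun i _ => ?_
    calc (g i ^ d i).natDegree ≤ d i * (g i).natDegree := Polynomial.natDegree_pow_le
      _ ≤ d i * 1 := Nat.mul_le_mul_left _ (hg i)
      _ = d i := mul_one _
  exact le_trans h2 (MvPolynomial.le_totalDegree hd)

lemma X_dvd_of_constantCoeff_zero {q : MvPolynomial (Fin 1) ℝ}
    (h : MvPolynomial.constantCoeff q = 0) :
    (MvPolynomial.X 0 : MvPolynomial (Fin 1) ℝ) ∣ q := by
  rw [MvPolynomial.X_dvd_iff_modMonomial_eq_zero]
  ext d
  rw [MvPolynomial.coeff_zero]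
  by_cases hd : Finsupp.single (0 : Fin 1) 1 ≤ d
  · exact MvPolynomial.coeff_modMonomial_of_le _ hd
  · rw [MvPolynomial.coeff_modMonomial_of_not_le _ hd]
    have hd0 : d = 0 := by
      refine Finsupp.ext fun i => ?_
      have h1 : (0 : Fin 1) = i := Subsingleton.elim _ _
      have h2 := Finsupp.single_le_iff.not.mp hd
      rw [h1] at h2
      simp only [Finsupp.coe_zero, Pi.zero_apply]
      omega
    rw [hd0]
    rw [MvPolynomial.constantCoeff_eq] at h
    exact h

lemma cons_eq_two (x y : ℝ) : (Fin.cons x ![y] : Fin 2 → ℝ) = ![x, y] := by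
  funext i
  refine Fin.cases ?_ (fun j => ?_) i
  · rfl
  · have : j = 0 := Subsingleton.elim _ _
    subst this; rfl

lemma X1_dvd_of_vanish (v : MvPolynomial (Fin 2) ℝ)
    (h : ∀ x : ℝ, MvPolynomial.eval ![x, 0] v = 0) :
    (MvPolynomial.X 1 : MvPolynomial (Fin 2) ℝ) ∣ v := by
  set Q := MvPolynomial.finSuccEquiv ℝ 1 v with hQ
  have hcoeff : ∀ n : ℕ, (MvPolynomial.X 0 : MvPolynomial (Fin 1) ℝ) ∣ Q.coeff n := by
    have hR : Q.map (MvPolynomial.eval (![0] : Fin 1 → ℝ)) = 0 := by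
      refine Polynomial.funext fun x => ?_
      have he := MvPolynomial.eval_eq_eval_mv_eval' (![0] : Fin 1 → ℝ) x v
      rw [cons_eq_two] at he
      rw [Polynomial.eval_zero, ← hQ] at *
      rw [← he, h x]
    intro n
    refine X_dvd_of_constantCoeff_zero ?_
    have := congrArg (fun p => p.coeff n) hR
    simp only [Polynomial.coeff_map, Polynomial.coeff_zero] at this
    rw [MvPolynomial.constantCoeff_eq]
    have h0 : (![0] : Fin 1 → ℝ) = fun _ => 0 := by
      funext i; have : i = 0 := Subsingleton.elim _ _; subst this; rfl
    rw [h0] at this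
    have := this
    rwa [show (fun _ => (0:ℝ) : Fin 1 → ℝ) = 0 from rfl, MvPolynomial.eval_zero] at this
  have hdvd : Polynomial.C (MvPolynomial.X 0 : MvPolynomial (Fin 1) ℝ) ∣ Q :=
    (Polynomial.C_dvd_iff_dvd_coeff _ _).mpr hcoeff
  obtain ⟨z, hz⟩ := hdvd
  refine ⟨(MvPolynomial.finSuccEquiv ℝ 1).symm z, ?_⟩
  have hv : v = (MvPolynomial.finSuccEquiv ℝ 1).symm Q := by
    rw [hQ, AlgEquiv.symm_apply_apply]
  rw [hv, hz, map_mul]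
  congr 1
  have : Polynomial.C (MvPolynomial.X 0 : MvPolynomial (Fin 1) ℝ)
      = MvPolynomial.finSuccEquiv ℝ 1 (MvPolynomial.X 1) := by
    rw [show (1 : Fin 2) = (0 : Fin 1).succ from rfl, MvPolynomial.finSuccEquiv_X_succ]
  rw [this, AlgEquiv.symm_apply_apply]

lemma X0_dvd_of_vanish (v : MvPolynomial (Fin 2) ℝ)
    (h : ∀ y : ℝ, MvPolynomial.eval ![0, y] v = 0) :
    (MvPolynomial.X 0 : MvPolynomial (Fin 2) ℝ) ∣ v := by
  set Q := MvPolynomial.finSuccEquiv ℝ 1 v with hQ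
  have hc0 : Q.coeff 0 = 0 := by
    refine MvPolynomial.funext fun g => ?_
    have hg : (![g 0] : Fin 1 → ℝ) = g := by
      funext i; have : i = 0 := Subsingleton.elim _ _; subst this; rfl
    have he := MvPolynomial.eval_eq_eval_mv_eval' (![g 0] : Fin 1 → ℝ) 0 v
    rw [cons_eq_two, h (g 0)] at he
    rw [hg] at he
    rw [← Polynomial.coeff_zero_eq_eval_zero, Polynomial.coeff_map] at he
    rw [map_zero, hQ]
    exact he.symm
  have hdvd : Polynomial.X ∣ Q := Polynomial.X_dvd_iff.mpr hc0
  obtain ⟨z, hz⟩ := hdvd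
  refine ⟨(MvPolynomial.finSuccEquiv ℝ 1).symm z, ?_⟩
  have hv : v = (MvPolynomial.finSuccEquiv ℝ 1).symm Q := by
    rw [hQ, AlgEquiv.symm_apply_apply]
  rw [hv, hz, map_mul]
  congr 1
  rw [← MvPolynomial.finSuccEquiv_X_zero (R := ℝ) (n := 1), AlgEquiv.symm_apply_apply]

open MvPolynomial

noncomputable def lineSwap : MvPolynomial (Fin 2) ℝ →ₐ[ℝ] MvPolynomial (Fin 2) ℝ :=
  MvPolynomial.aeval ![MvPolynomial.X 0, 1 - MvPolynomial.X 0 - MvPolynomial.X 1]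

lemma lineSwap_invol (w : MvPolynomial (Fin 2) ℝ) : lineSwap (lineSwap w) = w := by
  have hcomp := MvPolynomial.comp_aeval
    (![MvPolynomial.X 0, 1 - MvPolynomial.X 0 - MvPolynomial.X 1] :
      Fin 2 → MvPolynomial (Fin 2) ℝ) lineSwap
  have hfun : (fun i => lineSwap
      ((![MvPolynomial.X 0, 1 - MvPolynomial.X 0 - MvPolynomial.X 1] :
        Fin 2 → MvPolynomial (Fin 2) ℝ) i)) = MvPolynomial.X := by
    funext i
    fin_cases i <;> (simp [lineSwap]; try ring)
  rw [hfun] at hcomp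
  have hthis := DFunLike.congr_fun hcomp w
  simp only [AlgHom.coe_comp, Function.comp_apply] at hthis
  have h2 : MvPolynomial.aeval MvPolynomial.X w = w := by
    simp [MvPolynomial.aeval_X_left]
  exact hthis.trans h2

lemma line3_dvd (v : MvPolynomial (Fin 2) ℝ)
    (h : ∀ t : ℝ, MvPolynomial.eval ![t, 1 - t] v = 0) :
    (1 - MvPolynomial.X 0 - MvPolynomial.X 1 : MvPolynomial (Fin 2) ℝ) ∣ v := by
  have hvan : ∀ x : ℝ, MvPolynomial.eval ![x, 0] (lineSwap v) = 0 := by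
    intro x
    rw [lineSwap, eval_aeval_mv]
    have : (fun i => MvPolynomial.eval ![x, 0]
        ((![MvPolynomial.X 0, 1 - MvPolynomial.X 0 - MvPolynomial.X 1] :
          Fin 2 → MvPolynomial (Fin 2) ℝ) i)) = ![x, 1 - x] := by
      funext i
      fin_cases i
      · simp
      · simp
    rw [this]
    exact h x
  obtain ⟨z, hz⟩ := X1_dvd_of_vanish _ hvan
  refine ⟨lineSwap z, ?_⟩
  have := congrArg lineSwap hz
  rw [lineSwap_invol, map_mul] at this
  rw [this]
  congr 1
  rw [lineSwap]
  simp [MvPolynomial.aeval_X]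

lemma factor_boundary (v : MvPolynomial (Fin 2) ℝ)
    (h1 : ∀ x : ℝ, MvPolynomial.eval ![x, 0] v = 0)
    (h2 : ∀ y : ℝ, MvPolynomial.eval ![0, y] v = 0)
    (h3 : ∀ t : ℝ, MvPolynomial.eval ![t, 1 - t] v = 0) :
    ∃ w, v = MvPolynomial.X 0 * MvPolynomial.X 1
      * (1 - MvPolynomial.X 0 - MvPolynomial.X 1) * w := by
  obtain ⟨a, ha⟩ := X1_dvd_of_vanish v h1
  -- a vanishes on the line x = 0
  have ha2 : ∀ y : ℝ, MvPolynomial.eval ![0, y] a = 0 := by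
    have hP : ∀ y : ℝ, y ≠ 0 → MvPolynomial.eval ![0, y] a = 0 := by
      intro y hy
      have := h2 y
      rw [ha] at this
      simp only [map_mul, MvPolynomial.eval_X] at this
      have hy' : (![0, y] : Fin 2 → ℝ) 1 = y := rfl
      rw [hy'] at this
      rcases mul_eq_zero.mp this with h | h
      · exact absurd h hy
      · exact h
    -- polynomial along the line
    set P := MvPolynomial.aeval (![Polynomial.C 0, Polynomial.X] : Fin 2 → ℝ[X]) a with hPdef
    have hevalP : ∀ y : ℝ, P.eval y = MvPolynomial.eval ![0, y] a := by
      intro y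
      rw [hPdef, eval_aeval_poly]
      have harg : (fun i => Polynomial.eval y
          ((![Polynomial.C 0, Polynomial.X] : Fin 2 → ℝ[X]) i)) = ![(0:ℝ), y] := by
        funext i; fin_cases i <;> simp
      rw [harg]
    have hPzero : P = 0 := by
      refine Polynomial.eq_zero_of_infinite_isRoot _ ?_
      refine Set.Infinite.mono ?_ ((Set.finite_singleton (0:ℝ)).infinite_compl)
      intro y hy
      simp only [Set.mem_compl_iff, Set.mem_singleton_iff] at hy
      show P.IsRoot y
      rw [Polynomial.IsRoot, hevalP]
      exact hP y hy
    intro y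
    rw [← hevalP, hPzero, Polynomial.eval_zero]
  obtain ⟨b, hb⟩ := X0_dvd_of_vanish a ha2
  -- b vanishes on the line x + y = 1
  have hb3 : ∀ t : ℝ, MvPolynomial.eval ![t, 1 - t] b = 0 := by
    have hP : ∀ t : ℝ, t ≠ 0 → t ≠ 1 → MvPolynomial.eval ![t, 1 - t] b = 0 := by
      intro t ht0 ht1
      have := h3 t
      rw [ha, hb] at this
      simp only [map_mul, MvPolynomial.eval_X] at this
      have e0 : (![t, 1 - t] : Fin 2 → ℝ) 0 = t := rfl
      have e1 : (![t, 1 - t] : Fin 2 → ℝ) 1 = 1 - t := rfl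
      rw [e0, e1] at this
      rcases mul_eq_zero.mp this with h | h
      · exact absurd h (by intro hc; exact ht1 (by linarith))
      · rcases mul_eq_zero.mp h with h' | h'
        · exact absurd h' ht0
        · exact h'
    set P := MvPolynomial.aeval (![Polynomial.X, Polynomial.C 1 - Polynomial.X] : Fin 2 → ℝ[X]) b
      with hPdef
    have hevalP : ∀ t : ℝ, P.eval t = MvPolynomial.eval ![t, 1 - t] b := by
      intro t
      rw [hPdef, eval_aeval_poly]
      have harg : (fun i => Polynomial.eval t
          ((![Polynomial.X, Polynomial.C 1 - Polynomial.X] : Fin 2 → ℝ[X]) i)) = ![t, 1 - t] := by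
        funext i; fin_cases i <;> simp
      rw [harg]
    have hPzero : P = 0 := by
      refine Polynomial.eq_zero_of_infinite_isRoot _ ?_
      refine Set.Infinite.mono ?_ (Set.Finite.infinite_compl
        (Set.Finite.insert (0:ℝ) (Set.finite_singleton (1:ℝ))))
      intro t ht
      simp only [Set.mem_compl_iff, Set.mem_insert_iff, Set.mem_singleton_iff, not_or] at ht
      show P.IsRoot t
      rw [Polynomial.IsRoot, hevalP]
      exact hP t ht.1 ht.2
    intro t
    rw [← hevalP, hPzero, Polynomial.eval_zero]
  obtain ⟨w, hw⟩ := line3_dvd b hb3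
  refine ⟨w, ?_⟩
  rw [ha, hb, hw]
  ring

open MvPolynomial

lemma sum_eq_degree (d : Fin 2 →₀ ℕ) : (d.sum fun _ e => e) = d.degree := by
  rw [Finsupp.degree, Finsupp.sum]; rfl

lemma exists_top_coeff {p : MvPolynomial (Fin 2) ℝ} (hp : p ≠ 0) :
    ∃ d, MvPolynomial.coeff d p ≠ 0 ∧ d.degree = p.totalDegree := by
  obtain ⟨d, hd, hsup⟩ := Finset.exists_mem_eq_sup p.support
    (MvPolynomial.support_nonempty.mpr hp) (fun s => s.sum fun _ e => e)
  exact ⟨d, MvPolynomial.mem_support_iff.mp hd, by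
    rw [← sum_eq_degree, MvPolynomial.totalDegree, hsup]⟩

lemma coeff_zero_of_degree_gt {p : MvPolynomial (Fin 2) ℝ} {d : Fin 2 →₀ ℕ}
    (h : p.totalDegree < d.degree) : MvPolynomial.coeff d p = 0 := by
  by_contra hc
  have := MvPolynomial.le_totalDegree (MvPolynomial.mem_support_iff.mpr hc)
  rw [sum_eq_degree] at this
  omega

lemma totalDegree_mul_eq {p q : MvPolynomial (Fin 2) ℝ} (hp : p ≠ 0) (hq : q ≠ 0) :
    (p * q).totalDegree = p.totalDegree + q.totalDegree := by
  classical
  set m := p.totalDegree with hm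
  set n := q.totalDegree with hn
  refine le_antisymm (MvPolynomial.totalDegree_mul p q) ?_
  set P := MvPolynomial.homogeneousComponent m p with hP
  set Q := MvPolynomial.homogeneousComponent n q with hQn
  have hPne : P ≠ 0 := by
    obtain ⟨d, hd, hdeg⟩ := exists_top_coeff hp
    refine MvPolynomial.ne_zero_iff.mpr ⟨d, ?_⟩
    rw [hP, MvPolynomial.coeff_homogeneousComponent, if_pos hdeg]
    exact hd
  have hQne : Q ≠ 0 := by
    obtain ⟨d, hd, hdeg⟩ := exists_top_coeff hq
    refine MvPolynomial.ne_zero_iff.mpr ⟨d, ?_⟩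
    rw [hQn, MvPolynomial.coeff_homogeneousComponent, if_pos hdeg]
    exact hd
  have hPQne : P * Q ≠ 0 := mul_ne_zero hPne hQne
  obtain ⟨d, hd⟩ := MvPolynomial.ne_zero_iff.mp hPQne
  have hH : (P * Q).IsHomogeneous (m + n) :=
    (MvPolynomial.homogeneousComponent_isHomogeneous m p).mul
      (MvPolynomial.homogeneousComponent_isHomogeneous n q)
  have hddeg : d.degree = m + n := by
    have := hH hd
    rwa [show (1 : Fin 2 → ℕ) = fun _ => 1 from rfl, ← Finsupp.degree_eq_weight_one] at this
  -- coefficients agree in top degree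
  have hcoeff : MvPolynomial.coeff d (p * q) = MvPolynomial.coeff d (P * Q) := by
    rw [MvPolynomial.coeff_mul, MvPolynomial.coeff_mul]
    refine Finset.sum_congr rfl fun x hx => ?_
    rw [Finset.HasAntidiagonal.mem_antidiagonal] at hx
    have hsum : x.1.degree + x.2.degree = m + n := by
      have : (x.1 + x.2).degree = x.1.degree + x.2.degree := by
        rw [Finsupp.degree_eq_weight_one]
        exact map_add _ _ _
      rw [← this, hx, hddeg]
    by_cases h1 : x.1.degree = m
    · have h2 : x.2.degree = n := by omega
      rw [hP, hQn, MvPolynomial.coeff_homogeneousComponent,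
        MvPolynomial.coeff_homogeneousComponent, if_pos h1, if_pos h2]
    · rcases Nat.lt_or_ge x.1.degree m with hlt | hgt
      · -- then x.2.degree > n, so both coeff q and coeff Q vanish
        have h2 : n < x.2.degree := by omega
        have hc2 : MvPolynomial.coeff x.2 q = 0 := coeff_zero_of_degree_gt (by omega)
        have hcQ : MvPolynomial.coeff x.2 Q = 0 := by
          rw [hQn, MvPolynomial.coeff_homogeneousComponent, if_neg (by omega)]
        rw [hc2, hcQ, mul_zero, mul_zero]
      · have h1' : m < x.1.degree := by omega
        have hc1 : MvPolynomial.coeff x.1 p = 0 := coeff_zero_of_degree_gt (by omega)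
        have hcP : MvPolynomial.coeff x.1 P = 0 := by
          rw [hP, MvPolynomial.coeff_homogeneousComponent, if_neg (by omega)]
        rw [hc1, hcP, zero_mul, zero_mul]
  have hdne : MvPolynomial.coeff d (p * q) ≠ 0 := by rw [hcoeff]; exact hd
  have := MvPolynomial.le_totalDegree (MvPolynomial.mem_support_iff.mpr hdne)
  rw [sum_eq_degree, hddeg] at this
  exact this

def openTri : Set (Fin 2 → ℝ) := {p | 0 < p 0 ∧ 0 < p 1 ∧ p 0 + p 1 < 1}

lemma refTriangle_eq :
    refTriangle = {p : Fin 2 → ℝ | 0 ≤ p 0 ∧ 0 ≤ p 1 ∧ p 0 + p 1 ≤ 1} := by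
  apply le_antisymm
  · refine convexHull_min ?_ ?_
    · intro p hp
      rcases hp with h | h | h <;> (subst h; constructor <;> norm_num)
    · intro x hx y hy a b ha hb hab
      obtain ⟨hx0, hx1, hxs⟩ := hx
      obtain ⟨hy0, hy1, hys⟩ := hy
      refine ⟨?_, ?_, ?_⟩
      · simp only [Pi.add_apply, Pi.smul_apply, smul_eq_mul]
        have := mul_nonneg ha hx0
        have := mul_nonneg hb hy0
        linarith
      · simp only [Pi.add_apply, Pi.smul_apply, smul_eq_mul]
        have := mul_nonneg ha hx1
        have := mul_nonneg hb hy1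
        linarith
      · simp only [Pi.add_apply, Pi.smul_apply, smul_eq_mul]
        nlinarith
  · intro p hp
    obtain ⟨h0, h1, hs⟩ := hp
    have hv0 : (![0,0] : Fin 2 → ℝ) ∈ convexHull ℝ {![0, 0], ![1, 0], ![0, 1]} :=
      subset_convexHull ℝ _ (by simp)
    have hv1 : (![1,0] : Fin 2 → ℝ) ∈ convexHull ℝ {![0, 0], ![1, 0], ![0, 1]} :=
      subset_convexHull ℝ _ (by simp)
    have hv2 : (![0,1] : Fin 2 → ℝ) ∈ convexHull ℝ {![0, 0], ![1, 0], ![0, 1]} :=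
      subset_convexHull ℝ _ (by simp)
    have hconv := convex_convexHull ℝ ({![0, 0], ![1, 0], ![0, 1]} : Set (Fin 2 → ℝ))
    by_cases hz : p 0 + p 1 = 0
    · have hp0 : p 0 = 0 := by linarith
      have hp1 : p 1 = 0 := by linarith
      have : p = ![0,0] := by
        funext i; fin_cases i
        · exact hp0
        · exact hp1
      rw [refTriangle, this]; exact hv0
    · set s := p 0 + p 1 with hsdef
      have hspos : 0 < s := lt_of_le_of_ne (by linarith) (Ne.symm hz)
      -- midpoint on segment [v1, v2]
      have hm : (p 0 / s) • (![1,0] : Fin 2 → ℝ) + (p 1 / s) • (![0,1] : Fin 2 → ℝ)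
          ∈ convexHull ℝ {![0, 0], ![1, 0], ![0, 1]} := by
        refine hconv hv1 hv2 (by positivity) (by positivity) ?_
        field_simp
        exact hsdef.symm
      have hfinal := hconv hv0 hm (a := 1 - s) (b := s) (by linarith) (le_of_lt hspos)
        (by ring)
      have heq : (1 - s) • (![0,0] : Fin 2 → ℝ)
          + s • ((p 0 / s) • (![1,0] : Fin 2 → ℝ) + (p 1 / s) • (![0,1] : Fin 2 → ℝ)) = p := by
        funext i; fin_cases i <;>
          (simp only [Pi.add_apply, Pi.smul_apply, smul_eq_mul]
           simp [Matrix.cons_val_zero, Matrix.cons_val_one]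
           field_simp)
      rw [refTriangle]
      rw [heq] at hfinal
      exact hfinal

lemma refTriangle_compact : IsCompact refTriangle := by
  rw [refTriangle]
  refine Set.Finite.isCompact_convexHull (𝕜 := ℝ) ?_
  exact (Set.finite_singleton _).insert _ |>.insert _

lemma openTri_subset : openTri ⊆ refTriangle := by
  rw [refTriangle_eq]
  intro p hp
  obtain ⟨h0, h1, hs⟩ := hp
  exact ⟨le_of_lt h0, le_of_lt h1, le_of_lt hs⟩

lemma openTri_open : IsOpen openTri := by
  have h0 : Continuous fun p : Fin 2 → ℝ => p 0 := continuous_apply 0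
  have h1 : Continuous fun p : Fin 2 → ℝ => p 1 := continuous_apply 1
  have : openTri = (fun p : Fin 2 → ℝ => p 0) ⁻¹' (Set.Ioi 0)
      ∩ ((fun p : Fin 2 → ℝ => p 1) ⁻¹' (Set.Ioi 0)
      ∩ (fun p : Fin 2 → ℝ => p 0 + p 1) ⁻¹' (Set.Iio 1)) := by
    ext p; simp [openTri, Set.mem_Ioi, Set.mem_Iio, and_assoc]
  rw [this]
  exact (h0.isOpen_preimage _ isOpen_Ioi).inter
    ((h1.isOpen_preimage _ isOpen_Ioi).inter
      ((h0.add h1).isOpen_preimage _ isOpen_Iio))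

/-- a continuous nonnegative function with zero integral vanishes on the open triangle -/
lemma zero_on_openTri {f : (Fin 2 → ℝ) → ℝ} (hf : Continuous f)
    (hnonneg : ∀ x ∈ refTriangle, 0 ≤ f x)
    (hzero : ∫ x in refTriangle, f x = 0) :
    ∀ z ∈ openTri, f z = 0 := by
  intro z hz
  by_contra hne
  have hzpos : 0 < f z := lt_of_le_of_ne (hnonneg z (openTri_subset hz)) (Ne.symm hne)
  set V := openTri ∩ f ⁻¹' (Set.Ioi (f z / 2)) with hV
  have hVopen : IsOpen V := openTri_open.inter (hf.isOpen_preimage _ isOpen_Ioi)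
  have hzV : z ∈ V := ⟨hz, by simp [Set.mem_Ioi]; linarith⟩
  obtain ⟨r, hrpos, hball⟩ := Metric.isOpen_iff.mp hVopen z hzV
  have hballT : Metric.ball z r ⊆ refTriangle := hball.trans (fun x hx => openTri_subset hx.1)
  have hintT : IntegrableOn f refTriangle :=
    ContinuousOn.integrableOn_compact refTriangle_compact hf.continuousOn
  have hintB : IntegrableOn f (Metric.ball z r) := hintT.mono_set hballT
  have hlow : f z / 2 * (volume (Metric.ball z r)).toReal ≤ ∫ x in Metric.ball z r, f x := by
    refine MeasureTheory.setIntegral_ge_of_const_le_real measurableSet_ball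
      (ne_of_lt measure_ball_lt_top) (fun x hx => le_of_lt (hball hx).2) hintB
  have hmono : ∫ x in Metric.ball z r, f x ≤ ∫ x in refTriangle, f x := by
    refine MeasureTheory.setIntegral_mono_set hintT ?_ (HasSubset.Subset.eventuallyLE hballT)
    refine (MeasureTheory.ae_restrict_iff' ?_).mpr (MeasureTheory.ae_of_all _ hnonneg)
    exact refTriangle_compact.isClosed.measurableSet
  have hballpos : 0 < (volume (Metric.ball z r)).toReal := by
    refine ENNReal.toReal_pos (ne_of_gt (Metric.measure_ball_pos volume z hrpos)) (ne_of_lt measure_ball_lt_top)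
  nlinarith [hlow, hmono, hzero ▸ hmono]

open MvPolynomial

lemma mv_zero_of_zero_on_openTri {w : MvPolynomial (Fin 2) ℝ}
    (h : ∀ z ∈ openTri, MvPolynomial.eval z w = 0) : w = 0 := by
  have hstep1 : ∀ x ∈ Set.Ioo (0:ℝ) (1/2 : ℝ), ∀ y : ℝ, MvPolynomial.eval ![x, y] w = 0 := by
    intro x hx y
    set P := MvPolynomial.aeval (![Polynomial.C x, Polynomial.X] : Fin 2 → ℝ[X]) w with hPdef
    have hevalP : ∀ y : ℝ, P.eval y = MvPolynomial.eval ![x, y] w := by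
      intro y
      rw [hPdef, eval_aeval_poly]
      have harg : (fun i => Polynomial.eval y
          ((![Polynomial.C x, Polynomial.X] : Fin 2 → ℝ[X]) i)) = ![x, y] := by
        funext i; fin_cases i <;> simp
      rw [harg]
    have hPz : P = 0 := by
      refine Polynomial.eq_zero_of_infinite_isRoot _ ?_
      refine Set.Infinite.mono ?_ (Set.Ioo_infinite (by norm_num : (0:ℝ) < 1/2))
      intro y hy
      show P.IsRoot y
      rw [Polynomial.IsRoot, hevalP]
      refine h _ ⟨?_, ?_, ?_⟩
      · show (0:ℝ) < x; exact hx.1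
      · show (0:ℝ) < y; exact hy.1
      · show x + y < 1
        have := hx.2; have := hy.2
        linarith
    rw [← hevalP, hPz, Polynomial.eval_zero]
  have hstep2 : ∀ x y : ℝ, MvPolynomial.eval ![x, y] w = 0 := by
    intro x y
    set P := MvPolynomial.aeval (![Polynomial.X, Polynomial.C y] : Fin 2 → ℝ[X]) w with hPdef
    have hevalP : ∀ x : ℝ, P.eval x = MvPolynomial.eval ![x, y] w := by
      intro x
      rw [hPdef, eval_aeval_poly]
      have harg : (fun i => Polynomial.eval x
          ((![Polynomial.X, Polynomial.C y] : Fin 2 → ℝ[X]) i)) = ![x, y] := by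
        funext i; fin_cases i <;> simp
      rw [harg]
    have hPz : P = 0 := by
      refine Polynomial.eq_zero_of_infinite_isRoot _ ?_
      refine Set.Infinite.mono ?_ (Set.Ioo_infinite (by norm_num : (0:ℝ) < 1/2))
      intro x hx
      show P.IsRoot x
      rw [Polynomial.IsRoot, hevalP]
      exact hstep1 x hx y
    rw [← hevalP, hPz, Polynomial.eval_zero]
  refine MvPolynomial.funext fun g => ?_
  have : (![g 0, g 1] : Fin 2 → ℝ) = g := by
    funext i; fin_cases i <;> rfl
  rw [map_zero, ← this]
  exact hstep2 (g 0) (g 1)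

lemma eval_pos_openTri (z : Fin 2 → ℝ) (hz : z ∈ openTri) :
    0 < MvPolynomial.eval z ((MvPolynomial.X 0 : MvPolynomial (Fin 2) ℝ) * MvPolynomial.X 1
      * (1 - MvPolynomial.X 0 - MvPolynomial.X 1)) := by
  obtain ⟨h0, h1, hs⟩ := hz
  simp only [map_mul, map_sub, map_one, MvPolynomial.eval_X]
  have : (0:ℝ) < 1 - z 0 - z 1 := by linarith
  positivity

open MvPolynomial

lemma sum_eq_two (d : Fin 2 →₀ ℕ) : (d.sum fun _ e => e) = d 0 + d 1 := by
  rw [Finsupp.sum_fintype _ _ (fun _ => rfl), Fin.sum_univ_two]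

theorem kernel_zero (k : ℕ) (hk : 1 ≤ k) (hodd : Odd k) (v : MvPolynomial (Fin 2) ℝ)
    (hdeg : v.totalDegree ≤ k)
    (he1 : ∀ i < k, ∫ t in (0:ℝ)..1, t ^ i * MvPolynomial.eval ![t, 0] v = 0)
    (he2 : ∀ i < k, ∫ t in (0:ℝ)..1, t ^ i * MvPolynomial.eval ![0, t] v = 0)
    (he3 : ∀ i < k, ∫ t in (0:ℝ)..1, t ^ i * MvPolynomial.eval ![t, 1 - t] v = 0)
    (hint : ∀ a b : ℕ, a + b + 3 ≤ k →
      ∫ x in refTriangle, (x 0) ^ a * (x 1) ^ b * MvPolynomial.eval x v = 0) :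
    v = 0 := by
  -- edge polynomials
  set p₁ := MvPolynomial.aeval (![Polynomial.X, 0] : Fin 2 → ℝ[X]) v with hp₁
  set p₂ := MvPolynomial.aeval (![0, Polynomial.X] : Fin 2 → ℝ[X]) v with hp₂
  set p₃ := MvPolynomial.aeval (![Polynomial.X, Polynomial.C 1 - Polynomial.X] : Fin 2 → ℝ[X]) v
    with hp₃
  have hev₁ : ∀ t : ℝ, p₁.eval t = MvPolynomial.eval ![t, 0] v := by
    intro t
    rw [hp₁, eval_aeval_poly]
    have : (fun i => Polynomial.eval t ((![Polynomial.X, 0] : Fin 2 → ℝ[X]) i)) = ![t, 0] := by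
      funext i; fin_cases i <;> simp
    rw [this]
  have hev₂ : ∀ t : ℝ, p₂.eval t = MvPolynomial.eval ![0, t] v := by
    intro t
    rw [hp₂, eval_aeval_poly]
    have : (fun i => Polynomial.eval t ((![0, Polynomial.X] : Fin 2 → ℝ[X]) i)) = ![0, t] := by
      funext i; fin_cases i <;> simp
    rw [this]
  have hev₃ : ∀ t : ℝ, p₃.eval t = MvPolynomial.eval ![t, 1 - t] v := by
    intro t
    rw [hp₃, eval_aeval_poly]
    have : (fun i => Polynomial.eval t
        ((![Polynomial.X, Polynomial.C 1 - Polynomial.X] : Fin 2 → ℝ[X]) i)) = ![t, 1 - t] := by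
      funext i; fin_cases i <;> simp
    rw [this]
  have hdeg₁ : p₁.natDegree ≤ k := by
    refine le_trans (natDegree_aeval_le _ ?_ v) hdeg
    intro i; fin_cases i <;> simp
  have hdeg₂ : p₂.natDegree ≤ k := by
    refine le_trans (natDegree_aeval_le _ ?_ v) hdeg
    intro i; fin_cases i <;> simp
  have hdeg₃ : p₃.natDegree ≤ k := by
    refine le_trans (natDegree_aeval_le _ ?_ v) hdeg
    intro i; fin_cases i
    · simp
    · show ((Polynomial.C 1 : ℝ[X]) - Polynomial.X).natDegree ≤ 1
      rw [natDegree_one_sub_X]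
  have hm₁ : ∀ i < k, ∫ t in (0:ℝ)..1, t ^ i * p₁.eval t = 0 := by
    intro i hi; simp_rw [hev₁]; exact he1 i hi
  have hm₂ : ∀ i < k, ∫ t in (0:ℝ)..1, t ^ i * p₂.eval t = 0 := by
    intro i hi; simp_rw [hev₂]; exact he2 i hi
  have hm₃ : ∀ i < k, ∫ t in (0:ℝ)..1, t ^ i * p₃.eval t = 0 := by
    intro i hi; simp_rw [hev₃]; exact he3 i hi
  have ha₁ := poly_antisym hk hodd hdeg₁ hm₁ 0
  have ha₂ := poly_antisym hk hodd hdeg₂ hm₂ 0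
  have ha₃ := poly_antisym hk hodd hdeg₃ hm₃ 0
  rw [show (1:ℝ) - 0 = 1 by norm_num] at ha₁ ha₂ ha₃
  -- vertex values
  have hv₁₀ : p₁.eval 0 = MvPolynomial.eval ![(0:ℝ), 0] v := hev₁ 0
  have hv₁₁ : p₁.eval 1 = MvPolynomial.eval ![(1:ℝ), 0] v := hev₁ 1
  have hv₂₀ : p₂.eval 0 = MvPolynomial.eval ![(0:ℝ), 0] v := hev₂ 0
  have hv₂₁ : p₂.eval 1 = MvPolynomial.eval ![(0:ℝ), 1] v := hev₂ 1
  have hv₃₀ : p₃.eval 0 = MvPolynomial.eval ![(0:ℝ), 1] v := by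
    have := hev₃ 0
    rwa [show (![0, 1 - 0] : Fin 2 → ℝ) = ![0, 1] by norm_num] at this
  have hv₃₁ : p₃.eval 1 = MvPolynomial.eval ![(1:ℝ), 0] v := by
    have := hev₃ 1
    rwa [show (![1, 1 - 1] : Fin 2 → ℝ) = ![1, 0] by norm_num] at this
  -- values at the three vertices vanish
  rw [hv₁₀, hv₁₁] at ha₁
  rw [hv₂₀, hv₂₁] at ha₂
  rw [hv₃₀, hv₃₁] at ha₃
  have hA : MvPolynomial.eval ![(0:ℝ), 0] v = 0 := by linarith [ha₁, ha₂, ha₃]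
  have hB : MvPolynomial.eval ![(1:ℝ), 0] v = 0 := by linarith [ha₁, ha₂, ha₃]
  have hC : MvPolynomial.eval ![(0:ℝ), 1] v = 0 := by linarith [ha₁, ha₂, ha₃]
  -- edges vanish identically
  have hz₁ : p₁ = 0 :=
    poly_zero_of_vanish_ends hdeg₁ hm₁ (by rw [hv₁₀]; exact hA) (by rw [hv₁₁]; exact hB)
  have hz₂ : p₂ = 0 :=
    poly_zero_of_vanish_ends hdeg₂ hm₂ (by rw [hv₂₀]; exact hA) (by rw [hv₂₁]; exact hC)
  have hz₃ : p₃ = 0 :=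
    poly_zero_of_vanish_ends hdeg₃ hm₃ (by rw [hv₃₀]; exact hC) (by rw [hv₃₁]; exact hB)
  have hline₁ : ∀ x : ℝ, MvPolynomial.eval ![x, 0] v = 0 := by
    intro x; rw [← hev₁, hz₁, Polynomial.eval_zero]
  have hline₂ : ∀ y : ℝ, MvPolynomial.eval ![0, y] v = 0 := by
    intro y; rw [← hev₂, hz₂, Polynomial.eval_zero]
  have hline₃ : ∀ t : ℝ, MvPolynomial.eval ![t, 1 - t] v = 0 := by
    intro t; rw [← hev₃, hz₃, Polynomial.eval_zero]
  obtain ⟨w, hw⟩ := factor_boundary v hline₁ hline₂ hline₃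
  by_cases hv0 : v = 0
  · exact hv0
  exfalso
  have hwne : w ≠ 0 := by
    intro hwz; rw [hwz, mul_zero] at hw; exact hv0 hw
  set G : MvPolynomial (Fin 2) ℝ :=
    MvPolynomial.X 0 * MvPolynomial.X 1 * (1 - MvPolynomial.X 0 - MvPolynomial.X 1) with hG
  have hX0ne : (MvPolynomial.X 0 : MvPolynomial (Fin 2) ℝ) ≠ 0 := MvPolynomial.X_ne_zero 0
  have hX1ne : (MvPolynomial.X 1 : MvPolynomial (Fin 2) ℝ) ≠ 0 := MvPolynomial.X_ne_zero 1
  have hlinene : (1 - MvPolynomial.X 0 - MvPolynomial.X 1 : MvPolynomial (Fin 2) ℝ) ≠ 0 := by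
    intro h
    have := congrArg (MvPolynomial.eval (![0, 0] : Fin 2 → ℝ)) h
    simp at this
  have hGne : G ≠ 0 := mul_ne_zero (mul_ne_zero hX0ne hX1ne) hlinene
  -- total degree of G is 3
  have htdline : (1 - MvPolynomial.X 0 - MvPolynomial.X 1 :
      MvPolynomial (Fin 2) ℝ).totalDegree = 1 := by
    apply le_antisymm
    · rw [sub_eq_add_neg, sub_eq_add_neg]
      refine le_trans (MvPolynomial.totalDegree_add _ _) ?_
      refine max_le (le_trans (MvPolynomial.totalDegree_add _ _) (max_le ?_ ?_)) ?_
      · simp [MvPolynomial.totalDegree_one]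
      · rw [MvPolynomial.totalDegree_neg, MvPolynomial.totalDegree_X]
      · rw [MvPolynomial.totalDegree_neg, MvPolynomial.totalDegree_X]
    · have hmem : (Finsupp.single (0 : Fin 2) 1) ∈
          (1 - MvPolynomial.X 0 - MvPolynomial.X 1 : MvPolynomial (Fin 2) ℝ).support := by
        rw [MvPolynomial.mem_support_iff]
        rw [MvPolynomial.coeff_sub, MvPolynomial.coeff_sub]
        rw [MvPolynomial.coeff_X', MvPolynomial.coeff_X']
        rw [if_pos rfl, if_neg ?_]
        · have : MvPolynomial.coeff (Finsupp.single (0 : Fin 2) 1)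
              (1 : MvPolynomial (Fin 2) ℝ) = 0 := by
            rw [MvPolynomial.coeff_one, if_neg ?_]
            intro h
            have := congrArg (fun f : Fin 2 →₀ ℕ => f 0) h
            simp at this
          rw [this]; norm_num
        · intro h
          have := congrArg (fun f : Fin 2 →₀ ℕ => f 1) h
          simp at this
      have := MvPolynomial.le_totalDegree hmem
      rwa [sum_eq_two, Finsupp.single_eq_same, Finsupp.single_eq_of_ne (by norm_num), add_zero]
        at this
  have htdG : G.totalDegree = 3 := by
    rw [hG, totalDegree_mul_eq (mul_ne_zero hX0ne hX1ne) hlinene,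
      totalDegree_mul_eq hX0ne hX1ne, MvPolynomial.totalDegree_X, MvPolynomial.totalDegree_X,
      htdline]
  have htdw : w.totalDegree + 3 ≤ k := by
    have : v.totalDegree = G.totalDegree + w.totalDegree := by
      rw [hw]; exact totalDegree_mul_eq hGne hwne
    rw [htdG] at this
    omega
  -- the interior moment against w vanishes
  have hIvw : ∫ x in refTriangle, MvPolynomial.eval x w * MvPolynomial.eval x v = 0 := by
    have hexp : ∀ x : Fin 2 → ℝ, MvPolynomial.eval x w * MvPolynomial.eval x v
        = ∑ d ∈ w.support, MvPolynomial.coeff d w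
          * ((x 0) ^ (d 0) * (x 1) ^ (d 1) * MvPolynomial.eval x v) := by
      intro x
      rw [MvPolynomial.eval_eq' x w, Finset.sum_mul]
      refine Finset.sum_congr rfl fun d _ => ?_
      rw [Fin.prod_univ_two]
      ring
    simp_rw [hexp]
    rw [MeasureTheory.integral_finset_sum]
    · refine Finset.sum_eq_zero fun d hd => ?_
      rw [MeasureTheory.integral_const_mul]
      have hdb : d 0 + d 1 + 3 ≤ k := by
        have := MvPolynomial.le_totalDegree hd
        rw [sum_eq_two] at this
        omega
      rw [hint (d 0) (d 1) hdb, mul_zero]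
    · intro d _
      refine ContinuousOn.integrableOn_compact refTriangle_compact ?_
      refine Continuous.continuousOn ?_
      exact continuous_const.mul ((((continuous_apply 0).pow _).mul
        ((continuous_apply 1).pow _)).mul (MvPolynomial.continuous_eval v))
  -- pointwise sign
  have hpt : ∀ x : Fin 2 → ℝ, MvPolynomial.eval x v * MvPolynomial.eval x w
      = MvPolynomial.eval x G * (MvPolynomial.eval x w) ^ 2 := by
    intro x
    rw [hw, hG]
    simp only [map_mul]
    ring
  have hwz : ∀ z ∈ openTri, MvPolynomial.eval z w = 0 := by
    have hcont : Continuous fun x : Fin 2 → ℝ =>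
        MvPolynomial.eval x v * MvPolynomial.eval x w :=
      (MvPolynomial.continuous_eval v).mul (MvPolynomial.continuous_eval w)
    have hnn : ∀ x ∈ refTriangle, 0 ≤ MvPolynomial.eval x v * MvPolynomial.eval x w := by
      intro x hx
      rw [refTriangle_eq] at hx
      obtain ⟨h0, h1, hs⟩ := hx
      rw [hpt, hG]
      simp only [map_mul, map_sub, map_one, MvPolynomial.eval_X]
      have h3 : (0:ℝ) ≤ 1 - x 0 - x 1 := by linarith
      positivity
    have hz0 : ∫ x in refTriangle, MvPolynomial.eval x v * MvPolynomial.eval x w = 0 := by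
      have hcomm : (fun x : Fin 2 → ℝ => MvPolynomial.eval x v * MvPolynomial.eval x w)
          = fun x => MvPolynomial.eval x w * MvPolynomial.eval x v := by
        funext x; ring
      rw [hcomm]
      exact hIvw
    have := zero_on_openTri hcont hnn hz0
    intro z hz
    have hpos := eval_pos_openTri z hz
    have heq := this z hz
    rw [hpt z] at heq
    rcases mul_eq_zero.mp heq with h | h
    · rw [hG] at h; rw [h] at hpos; exact absurd hpos (lt_irrefl 0)
    · exact pow_eq_zero_iff (by norm_num) |>.mp h
  exact hwne (mv_zero_of_zero_on_openTri hwz)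

open MvPolynomial

/-! ### Counting -/

def triCount (m : ℕ) : Finset (ℕ × ℕ) :=
  (Finset.range (m+1) ×ˢ Finset.range (m+1)).filter fun p => p.1 + p.2 ≤ m

lemma mem_triCount {m : ℕ} {p : ℕ × ℕ} : p ∈ triCount m ↔ p.1 + p.2 ≤ m := by
  simp only [triCount, Finset.mem_filter, Finset.mem_product, Finset.mem_range]
  omega

lemma triCount_card (m : ℕ) : (triCount m).card * 2 = (m+1) * (m+2) := by
  induction m with
  | zero => decide
  | succ n ih =>
    have hsplit : triCount (n+1) = triCount n ∪ Finset.HasAntidiagonal.antidiagonal (n+1) := by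
      ext p
      simp only [mem_triCount, Finset.mem_union, Finset.HasAntidiagonal.mem_antidiagonal]
      omega
    have hdisj : Disjoint (triCount n) (Finset.HasAntidiagonal.antidiagonal (n+1)) := by
      rw [Finset.disjoint_left]
      intro p hp hp'
      rw [mem_triCount] at hp
      rw [Finset.HasAntidiagonal.mem_antidiagonal] at hp'
      omega
    rw [hsplit, Finset.card_union_of_disjoint hdisj, Finset.Nat.card_antidiagonal]
    have : ((triCount n).card + (n + 1 + 1)) * 2
        = (triCount n).card * 2 + (n + 2) * 2 := by ring
    rw [this, ih]
    ring

/-- interior index set -/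
abbrev J (k : ℕ) : Type := {p : ℕ × ℕ // p.1 + p.2 + 3 ≤ k}

instance (k : ℕ) : Fintype (J k) :=
  Fintype.subtype ((Finset.range k ×ˢ Finset.range k).filter fun p => p.1 + p.2 + 3 ≤ k)
    (by
      intro x
      simp only [Finset.mem_filter, Finset.mem_product, Finset.mem_range]
      omega)

lemma card_J (k : ℕ) : Fintype.card (J k)
    = ((Finset.range k ×ˢ Finset.range k).filter fun p => p.1 + p.2 + 3 ≤ k).card :=
  Fintype.card_of_subtype _ (by
    intro x
    simp only [Finset.mem_filter, Finset.mem_product, Finset.mem_range]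
    omega)

lemma card_J_eq (k : ℕ) (hk : 3 ≤ k) : Fintype.card (J k) = (triCount (k - 3)).card := by
  rw [card_J]
  congr 1
  ext p
  simp only [Finset.mem_filter, Finset.mem_product, Finset.mem_range, mem_triCount]
  omega

lemma card_J_small (k : ℕ) (hk : k < 3) : Fintype.card (J k) = 0 := by
  rw [card_J]
  rw [Finset.card_eq_zero]
  rw [Finset.filter_eq_empty_iff]
  intro p hp
  simp only [Finset.mem_product, Finset.mem_range] at hp
  omega

/-- the big index type -/
def Idx (k : ℕ) : Type := (Fin 3 × Fin k) ⊕ (J k)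

instance (k : ℕ) : Fintype (Idx k) := by
  unfold Idx; infer_instance

/-- the monomial exponent set of degree at most `k` -/
def expSet (k : ℕ) : Set (Fin 2 →₀ ℕ) := { n : Fin 2 →₀ ℕ | (n.sum fun _ e => e) ≤ k }

lemma sum_eq_two' (d : Fin 2 →₀ ℕ) : (d.sum fun _ e => e) = d 0 + d 1 := by
  rw [Finsupp.sum_fintype _ _ (fun _ => rfl), Fin.sum_univ_two]

/-- `expSet k` is in bijection with `triCount k` -/
noncomputable def expEquiv (k : ℕ) : expSet k ≃ {p : ℕ × ℕ // p ∈ triCount k} where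
  toFun n := ⟨(n.1 0, n.1 1), by
    rw [mem_triCount]
    have := n.2
    simp only [expSet, Set.mem_setOf_eq, sum_eq_two'] at this
    exact this⟩
  invFun p := ⟨Finsupp.single 0 p.1.1 + Finsupp.single 1 p.1.2, by
    simp only [expSet, Set.mem_setOf_eq, sum_eq_two']
    have := p.2
    rw [mem_triCount] at this
    simp only [Finsupp.add_apply, Finsupp.single_eq_same,
      Finsupp.single_eq_of_ne (show (0:Fin 2) ≠ 1 by norm_num),
      Finsupp.single_eq_of_ne (show (1:Fin 2) ≠ 0 by norm_num)]
    omega⟩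
  left_inv n := by
    refine Subtype.ext ?_
    refine Finsupp.ext fun i => ?_
    fin_cases i <;>
      simp [Finsupp.single_eq_of_ne (show (0:Fin 2) ≠ 1 by norm_num),
        Finsupp.single_eq_of_ne (show (1:Fin 2) ≠ 0 by norm_num)]
  right_inv p := by
    refine Subtype.ext ?_
    ext <;>
      simp [Finsupp.single_eq_of_ne (show (0:Fin 2) ≠ 1 by norm_num),
        Finsupp.single_eq_of_ne (show (1:Fin 2) ≠ 0 by norm_num)]

noncomputable instance (k : ℕ) : Fintype (expSet k) :=
  Fintype.ofEquiv _ (expEquiv k).symm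

lemma card_expSet (k : ℕ) : Fintype.card (expSet k) = (triCount k).card := by
  rw [Fintype.card_congr (expEquiv k), Fintype.card_coe]

lemma card_Idx (k : ℕ) (hk : 1 ≤ k) : Fintype.card (Idx k) = Fintype.card (expSet k) := by
  have hI : Fintype.card (Idx k) = 3 * k + Fintype.card (J k) := by
    unfold Idx
    rw [Fintype.card_sum, Fintype.card_prod, Fintype.card_fin, Fintype.card_fin]
  rw [hI, card_expSet]
  rcases Nat.lt_or_ge k 3 with h3 | h3
  · rw [card_J_small k h3]
    interval_cases k <;> decide
  · rw [card_J_eq k h3]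
    obtain ⟨m, rfl⟩ : ∃ m, k = m + 3 := ⟨k - 3, by omega⟩
    have e1 : (triCount (m + 3)).card * 2 = m*m + 9*m + 20 := by
      rw [triCount_card]; ring
    have e2 : (triCount (m + 3 - 3)).card * 2 = m*m + 3*m + 2 := by
      rw [show m + 3 - 3 = m by omega, triCount_card]; ring
    generalize m*m = A at e1 e2
    omega

open MvPolynomial

/-! ### the moment map -/

def edgeVec : Fin 3 → ℝ → (Fin 2 → ℝ) := ![edgeParam₁, edgeParam₂, edgeParam₃]

lemma cont_edgeVec (j : Fin 3) : Continuous (edgeVec j) := by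
  have h1 : Continuous edgeParam₁ := by
    refine continuous_pi fun i => ?_
    refine Fin.cases ?_ (fun j' => ?_) i
    · simpa only [edgeParam₁, Matrix.cons_val_zero] using continuous_id'
    · have hj : j' = 0 := Subsingleton.elim _ _
      subst hj
      simpa only [edgeParam₁, Matrix.cons_val_succ, Matrix.cons_val_zero] using
        (continuous_const : Continuous fun _ : ℝ => (0:ℝ))
  have h2 : Continuous edgeParam₂ := by
    refine continuous_pi fun i => ?_
    refine Fin.cases ?_ (fun j' => ?_) i
    · simpa only [edgeParam₂, Matrix.cons_val_zero] using
        (continuous_const : Continuous fun _ : ℝ => (0:ℝ))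
    · have hj : j' = 0 := Subsingleton.elim _ _
      subst hj
      simpa only [edgeParam₂, Matrix.cons_val_succ, Matrix.cons_val_zero] using continuous_id'
  have h3 : Continuous edgeParam₃ := by
    refine continuous_pi fun i => ?_
    refine Fin.cases ?_ (fun j' => ?_) i
    · simpa only [edgeParam₃, Matrix.cons_val_zero] using continuous_id'
    · have hj : j' = 0 := Subsingleton.elim _ _
      subst hj
      simpa only [edgeParam₃, Matrix.cons_val_succ, Matrix.cons_val_zero] using
        (continuous_sub_left (1:ℝ) : Continuous fun t : ℝ => 1 - t)
  fin_cases j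
  · exact h1
  · exact h2
  · exact h3

noncomputable def momentMap (k : ℕ) (f : (Fin 2 → ℝ) → ℝ) : Idx k → ℝ :=
  Sum.elim (fun ji => ∫ t in (0:ℝ)..1, t ^ (ji.2 : ℕ) * f (edgeVec ji.1 t))
    (fun p => ∫ x in refTriangle, (x 0) ^ p.1.1 * (x 1) ^ p.1.2 * f x)

lemma intEdge {f : (Fin 2 → ℝ) → ℝ} (hf : Continuous f) (i : ℕ) (j : Fin 3) :
    IntervalIntegrable (fun t => t ^ i * f (edgeVec j t)) volume 0 1 :=
  ((continuous_pow i).mul (hf.comp (cont_edgeVec j))).intervalIntegrable _ _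

lemma intTri {f : (Fin 2 → ℝ) → ℝ} (hf : Continuous f) (a b : ℕ) :
    IntegrableOn (fun x : Fin 2 → ℝ => (x 0) ^ a * (x 1) ^ b * f x) refTriangle :=
  ContinuousOn.integrableOn_compact refTriangle_compact
    ((((continuous_apply 0).pow a).mul ((continuous_apply 1).pow b)).mul hf).continuousOn

noncomputable def Phi (k : ℕ) :
    (MvPolynomial.restrictTotalDegree (Fin 2) ℝ k) →ₗ[ℝ] (Idx k → ℝ) where
  toFun v := momentMap k (fun x => MvPolynomial.eval x (v : MvPolynomial (Fin 2) ℝ))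
  map_add' v w := by
    funext idx
    cases idx with
    | inl ji =>
      simp only [momentMap, Sum.elim_inl, Pi.add_apply]
      have hco : ∀ x : Fin 2 → ℝ,
          MvPolynomial.eval x ((↑(v + w) : MvPolynomial (Fin 2) ℝ))
          = MvPolynomial.eval x (v : MvPolynomial (Fin 2) ℝ)
            + MvPolynomial.eval x (w : MvPolynomial (Fin 2) ℝ) := by
        intro x; rw [Submodule.coe_add, map_add]
      simp_rw [hco, mul_add]
      exact intervalIntegral.integral_add
        (intEdge (MvPolynomial.continuous_eval _) _ _)
        (intEdge (MvPolynomial.continuous_eval _) _ _)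
    | inr p =>
      simp only [momentMap, Sum.elim_inr, Pi.add_apply]
      have hco : ∀ x : Fin 2 → ℝ,
          MvPolynomial.eval x ((↑(v + w) : MvPolynomial (Fin 2) ℝ))
          = MvPolynomial.eval x (v : MvPolynomial (Fin 2) ℝ)
            + MvPolynomial.eval x (w : MvPolynomial (Fin 2) ℝ) := by
        intro x; rw [Submodule.coe_add, map_add]
      simp_rw [hco, mul_add]
      exact MeasureTheory.integral_add
        (intTri (MvPolynomial.continuous_eval _) _ _)
        (intTri (MvPolynomial.continuous_eval _) _ _)
  map_smul' c v := by
    funext idx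
    cases idx with
    | inl ji =>
      simp only [momentMap, Sum.elim_inl, RingHom.id_apply, Pi.smul_apply, smul_eq_mul]
      have hco : ∀ x : Fin 2 → ℝ,
          MvPolynomial.eval x ((↑(c • v) : MvPolynomial (Fin 2) ℝ))
          = c * MvPolynomial.eval x (v : MvPolynomial (Fin 2) ℝ) := by
        intro x; rw [Submodule.coe_smul, MvPolynomial.smul_eval]
      simp_rw [hco, mul_left_comm _ c]
      exact intervalIntegral.integral_const_mul c _
    | inr p =>
      simp only [momentMap, Sum.elim_inr, RingHom.id_apply, Pi.smul_apply, smul_eq_mul]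
      have hco : ∀ x : Fin 2 → ℝ,
          MvPolynomial.eval x ((↑(c • v) : MvPolynomial (Fin 2) ℝ))
          = c * MvPolynomial.eval x (v : MvPolynomial (Fin 2) ℝ) := by
        intro x; rw [Submodule.coe_smul, MvPolynomial.smul_eval]
      simp_rw [hco, mul_left_comm _ c]
      exact MeasureTheory.integral_const_mul c _

lemma Phi_apply (k : ℕ) (v : MvPolynomial.restrictTotalDegree (Fin 2) ℝ k) :
    Phi k v = momentMap k (fun x => MvPolynomial.eval x (v : MvPolynomial (Fin 2) ℝ)) := rfl

lemma Phi_inj (k : ℕ) (hk : 1 ≤ k) (hodd : Odd k) : Function.Injective (Phi k) := by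
  rw [← LinearMap.ker_eq_bot, LinearMap.ker_eq_bot']
  intro v hv
  have hdeg := (MvPolynomial.mem_restrictTotalDegree _ _ _).mp v.2
  have hcomp : ∀ idx : Idx k, momentMap k
      (fun x => MvPolynomial.eval x (v : MvPolynomial (Fin 2) ℝ)) idx = 0 := by
    intro idx
    have := congrFun hv idx
    simpa [Phi_apply] using this
  have hz : (v : MvPolynomial (Fin 2) ℝ) = 0 := by
    refine kernel_zero k hk hodd _ hdeg ?_ ?_ ?_ ?_
    · intro i hi
      have := hcomp (Sum.inl ((0 : Fin 3), (⟨i, hi⟩ : Fin k)))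
      simpa [momentMap, edgeVec, edgeParam₁] using this
    · intro i hi
      have := hcomp (Sum.inl ((1 : Fin 3), (⟨i, hi⟩ : Fin k)))
      simpa [momentMap, edgeVec, edgeParam₂] using this
    · intro i hi
      have := hcomp (Sum.inl ((2 : Fin 3), (⟨i, hi⟩ : Fin k)))
      simpa [momentMap, edgeVec, edgeParam₃] using this
    · intro a b hab
      have := hcomp (Sum.inr (⟨(a, b), hab⟩ : J k))
      simpa [momentMap] using this
  exact Subtype.ext hz

lemma finrank_V (k : ℕ) :
    Module.finrank ℝ (MvPolynomial.restrictTotalDegree (Fin 2) ℝ k)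
      = Fintype.card (expSet k) :=
  Module.finrank_eq_card_basis (MvPolynomial.basisRestrictSupport ℝ _)

lemma Phi_surj (k : ℕ) (hk : 1 ≤ k) (hodd : Odd k) : Function.Surjective (Phi k) := by
  have hinj := Phi_inj k hk hodd
  have h1 : Module.finrank ℝ (LinearMap.range (Phi k))
      = Module.finrank ℝ (MvPolynomial.restrictTotalDegree (Fin 2) ℝ k) :=
    LinearMap.finrank_range_of_inj hinj
  have h2 : Module.finrank ℝ (Idx k → ℝ) = Fintype.card (Idx k) := Module.finrank_pi ℝ
  have htop : LinearMap.range (Phi k) = ⊤ := by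
    refine Submodule.eq_top_of_finrank_eq ?_
    rw [h1, finrank_V, ← card_Idx k hk, ← h2]
  exact LinearMap.range_eq_top.mp htop

end CRaux

/-- Well-definedness of the local Crouzeix–Raviart interpolation operator
`I_{K,k}^{loc}` on the reference element: for odd `k ≥ 1` and every continuous `u`
there is a unique polynomial of total degree at most `k` matching the
Crouzeix–Raviart moments of `u` of order `k`. -/
theorem stmt_7 (k : ℕ) (hk : 1 ≤ k) (hodd : Odd k)
    (u : (Fin 2 → ℝ) → ℝ) (hu : Continuous u) :
    ∃! v : MvPolynomial (Fin 2) ℝ,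
      v.totalDegree ≤ k ∧ MatchesCRMoments k u (fun x => MvPolynomial.eval x v) := by
  classical
  obtain ⟨v, hv⟩ := CRaux.Phi_surj k hk hodd (CRaux.momentMap k u)
  refine ⟨(v : MvPolynomial (Fin 2) ℝ), ⟨?_, ?_, ?_⟩, ?_⟩
  · exact (MvPolynomial.mem_restrictTotalDegree _ _ _).mp v.2
  · -- edge moments
    intro i hi γ hγ
    have hcomp := fun idx => congrFun hv idx
    simp only [Set.mem_insert_iff, Set.mem_singleton_iff] at hγ
    rcases hγ with rfl | rfl | rfl
    · have := hcomp (Sum.inl ((0 : Fin 3), (⟨i, hi⟩ : Fin k)))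
      simpa [CRaux.Phi_apply, CRaux.momentMap, CRaux.edgeVec] using this
    · have := hcomp (Sum.inl ((1 : Fin 3), (⟨i, hi⟩ : Fin k)))
      simpa [CRaux.Phi_apply, CRaux.momentMap, CRaux.edgeVec] using this
    · have := hcomp (Sum.inl ((2 : Fin 3), (⟨i, hi⟩ : Fin k)))
      simpa [CRaux.Phi_apply, CRaux.momentMap, CRaux.edgeVec] using this
  · -- interior moments
    intro a b hab
    have := congrFun hv (Sum.inr (⟨(a, b), hab⟩ : CRaux.J k))
    simpa [CRaux.Phi_apply, CRaux.momentMap] using this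
  · -- uniqueness
    rintro y ⟨hydeg, hyedge, hyint⟩
    set yel : MvPolynomial.restrictTotalDegree (Fin 2) ℝ k :=
      ⟨y, (MvPolynomial.mem_restrictTotalDegree _ _ _).mpr hydeg⟩ with hyel
    have hPhiy : CRaux.Phi k yel = CRaux.momentMap k u := by
      funext idx
      cases idx with
      | inl ji =>
        obtain ⟨j, i⟩ := ji
        fin_cases j
        · have := hyedge (i : ℕ) i.2 edgeParam₁ (by simp)
          simpa [CRaux.Phi_apply, CRaux.momentMap, CRaux.edgeVec] using this
        · have := hyedge (i : ℕ) i.2 edgeParam₂ (by simp)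
          simpa [CRaux.Phi_apply, CRaux.momentMap, CRaux.edgeVec] using this
        · have := hyedge (i : ℕ) i.2 edgeParam₃ (by simp)
          simpa [CRaux.Phi_apply, CRaux.momentMap, CRaux.edgeVec] using this
      | inr p =>
        have := hyint p.1.1 p.1.2 p.2
        simpa [CRaux.Phi_apply, CRaux.momentMap] using this
    have : yel = v := CRaux.Phi_inj k hk hodd (by rw [hPhiy, hv])
    have := congrArg (fun z : MvPolynomial.restrictTotalDegree (Fin 2) ℝ k =>
      (z : MvPolynomial (Fin 2) ℝ)) this
    simpa [hyel] using this
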